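/- arXiv:1511.02273 — 2 statements merged into one kernel-verified Lean document; each statement's English description precedes it below -/
import Mathlib

section
/- Let a < b be reals, L = b − a, and ε > 0. Let φ : [0,1] → [a,b] be nondecreasing with φ(0) = a and φ(1) = b. Then the sum over all halting dyadic nodes (ℓ, j) of ℓ·2^{−ℓ} is at most 3 + log₂⁺(L/(2ε)), where log₂⁺(t) = max{0, log₂ t}. (This is the expected number of random bits used by the bisection algorithm, Theorem 1(ii).) -/
open scoped ENNReal

/-- The length of the subinterval associated with the dyadic node `(ℓ, j)` by the
quantile function `φ`: `λ(ℓ,j) = φ((j+1)·2^{-ℓ}) - φ(j·2^{-ℓ})`. -/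
noncomputable def lamBis (φ : ℝ → ℝ) (ℓ j : ℕ) : ℝ :=
  φ (((j : ℝ) + 1) / 2 ^ ℓ) - φ ((j : ℝ) / 2 ^ ℓ)

/-- The dyadic node `(ℓ, j)` (with `j < 2^ℓ`) is halting if its interval has length
at most `2ε` while every strict ancestor `(ℓ', ⌊j·2^{ℓ'-ℓ}⌋)` has length `> 2ε`. -/
def HaltingNode (φ : ℝ → ℝ) (ε : ℝ) (ℓ j : ℕ) : Prop :=
  j < 2 ^ ℓ ∧ lamBis φ ℓ j ≤ 2 * ε ∧
    ∀ ℓ' < ℓ, 2 * ε < lamBis φ ℓ' (j / 2 ^ (ℓ - ℓ'))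

noncomputable def dyI (ℓ j : ℕ) : Set ℝ := Set.Ico ((j : ℝ) / 2 ^ ℓ) (((j : ℝ) + 1) / 2 ^ ℓ)

lemma dyI_subset {ℓ' ℓ : ℕ} (h : ℓ' ≤ ℓ) (j : ℕ) : dyI ℓ j ⊆ dyI ℓ' (j / 2 ^ (ℓ - ℓ')) := by
  set d := ℓ - ℓ' with hd
  have hℓ : ℓ = ℓ' + d := by omega
  have h2 : (0:ℝ) < 2 ^ ℓ := by positivity
  have h2' : (0:ℝ) < 2 ^ ℓ' := by positivity
  apply Set.Ico_subset_Ico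
  · rw [div_le_div_iff₀ h2' h2, hℓ, pow_add]
    have : ((j / 2 ^ d : ℕ) : ℝ) * 2 ^ d ≤ (j : ℝ) := by
      have := Nat.div_mul_le_self j (2 ^ d)
      exact_mod_cast this
    calc ((j / 2 ^ d : ℕ) : ℝ) * (2 ^ ℓ' * 2 ^ d) = ((j / 2 ^ d : ℕ) : ℝ) * 2 ^ d * 2 ^ ℓ' := by ring
    _ ≤ (j:ℝ) * 2 ^ ℓ' := by nlinarith
  · rw [div_le_div_iff₀ h2 h2', hℓ, pow_add]
    have : (j : ℝ) + 1 ≤ (((j / 2 ^ d : ℕ) : ℝ) + 1) * 2 ^ d := by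
      have h1 : j + 1 ≤ (j / 2 ^ d + 1) * 2 ^ d := by
        have hp : 0 < 2 ^ d := Nat.pow_pos (by norm_num)
        have h1 := Nat.div_add_mod j (2 ^ d)
        have h2 := Nat.mod_lt j hp
        nlinarith [Nat.div_mul_le_self j (2 ^ d)]
      exact_mod_cast h1
    calc ((j:ℝ) + 1) * 2 ^ ℓ' ≤ (((j / 2 ^ d : ℕ) : ℝ) + 1) * 2 ^ d * 2 ^ ℓ' := by nlinarith
    _ = (((j / 2 ^ d : ℕ) : ℝ) + 1) * (2 ^ ℓ' * 2 ^ d) := by ring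

lemma dyI_disjoint {ℓ j k : ℕ} (h : j ≠ k) : Disjoint (dyI ℓ j) (dyI ℓ k) := by
  have h2 : (0:ℝ) < 2 ^ ℓ := by positivity
  rw [dyI, dyI, Set.Ico_disjoint_Ico]
  rcases h.lt_or_gt with h' | h'
  · have : (j:ℝ) + 1 ≤ (k:ℝ) := by exact_mod_cast h'
    rw [min_le_iff]; left
    rw [le_max_iff]; right
    gcongr
  · have : (k:ℝ) + 1 ≤ (j:ℝ) := by exact_mod_cast h'
    rw [min_le_iff]; right
    rw [le_max_iff]; left
    gcongr

lemma halting_antichain {φ : ℝ → ℝ} {ε : ℝ} {ℓ₁ j₁ ℓ₂ j₂ : ℕ}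
    (h1 : HaltingNode φ ε ℓ₁ j₁) (h2 : HaltingNode φ ε ℓ₂ j₂) (hle : ℓ₁ ≤ ℓ₂)
    (heq : j₂ / 2 ^ (ℓ₂ - ℓ₁) = j₁) : ℓ₁ = ℓ₂ ∧ j₁ = j₂ := by
  rcases eq_or_lt_of_le hle with h | h
  · subst h
    simp at heq
    exact ⟨rfl, heq.symm⟩
  · exfalso
    have := h2.2.2 ℓ₁ h
    rw [heq] at this
    linarith [h1.2.1]

lemma halting_disjoint {φ : ℝ → ℝ} {ε : ℝ} {ℓ₁ j₁ ℓ₂ j₂ : ℕ}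
    (h1 : HaltingNode φ ε ℓ₁ j₁) (h2 : HaltingNode φ ε ℓ₂ j₂)
    (hne : (ℓ₁, j₁) ≠ (ℓ₂, j₂)) : Disjoint (dyI ℓ₁ j₁) (dyI ℓ₂ j₂) := by
  wlog hle : ℓ₁ ≤ ℓ₂ generalizing ℓ₁ j₁ ℓ₂ j₂
  · exact (this h2 h1 (Ne.symm hne) (by omega)).symm
  by_cases hk : j₂ / 2 ^ (ℓ₂ - ℓ₁) = j₁
  · obtain ⟨he, hj⟩ := halting_antichain h1 h2 hle hk
    exact absurd (by rw [he, hj]) hne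
  · exact ((dyI_disjoint (Ne.symm hk)).mono_right (dyI_subset hle j₂))

lemma volume_dyI (ℓ j : ℕ) : MeasureTheory.volume (dyI ℓ j) = ((2 : ℝ≥0∞) ^ ℓ)⁻¹ := by
  rw [dyI, Real.volume_Ico]
  have : ((j : ℝ) + 1) / 2 ^ ℓ - (j : ℝ) / 2 ^ ℓ = (2 ^ ℓ)⁻¹ := by
    field_simp
    ring
  rw [this, ENNReal.ofReal_inv_of_pos (by positivity), ENNReal.ofReal_pow (by norm_num : (0:ℝ) ≤ 2)]
  norm_num

open MeasureTheory in
lemma level_bound (φ : ℝ → ℝ) (ε : ℝ) (ℓ' : ℕ) :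
    ∑' u : {q : ℕ × ℕ // HaltingNode φ ε q.1 q.2},
      (if ℓ' < u.1.1 then ((2:ℝ≥0∞) ^ u.1.1)⁻¹ else 0)
    ≤ volume (⋃ k ∈ Finset.filter (fun k => 2 * ε < lamBis φ ℓ' k) (Finset.range (2 ^ ℓ')),
        dyI ℓ' k) := by
  set S := {q : ℕ × ℕ // HaltingNode φ ε q.1 q.2}
  set F : S → Set ℝ := fun u => if ℓ' < u.1.1 then dyI u.1.1 u.1.2 else ∅ with hF
  have hvol : ∀ u : S, (if ℓ' < u.1.1 then ((2:ℝ≥0∞) ^ u.1.1)⁻¹ else 0) = volume (F u) := by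
    intro u
    by_cases h : ℓ' < u.1.1 <;> simp [hF, h, volume_dyI]
  calc ∑' u : S, (if ℓ' < u.1.1 then ((2:ℝ≥0∞) ^ u.1.1)⁻¹ else 0)
      = ∑' u : S, volume (F u) := by exact tsum_congr hvol
    _ = volume (⋃ u : S, F u) := by
        refine (measure_iUnion ?_ ?_).symm
        · intro u v huv
          simp only [Function.onFun, hF]
          by_cases hu : ℓ' < u.1.1
          · by_cases hv : ℓ' < v.1.1
            · simp only [hu, hv, if_pos]
              refine halting_disjoint u.2 v.2 ?_
              intro h
              apply huv
              exact Subtype.ext (Prod.ext (congrArg Prod.fst h) (congrArg Prod.snd h))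
            · simp [hv]
          · simp [hu]
        · intro u
          by_cases hu : ℓ' < u.1.1 <;> simp [hF, hu, dyI, measurableSet_Ico]
    _ ≤ _ := by
        apply measure_mono
        rintro x hx
        simp only [Set.mem_iUnion] at hx ⊢
        obtain ⟨u, hu⟩ := hx
        by_cases h : ℓ' < u.1.1
        · rw [hF] at hu; simp only [if_pos h] at hu
          refine ⟨u.1.2 / 2 ^ (u.1.1 - ℓ'), ?_, dyI_subset h.le u.1.2 hu⟩
          simp only [Finset.mem_filter, Finset.mem_range]
          constructor
          · have hj := u.2.1
            have : u.1.2 / 2 ^ (u.1.1 - ℓ') < 2 ^ ℓ' := by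
              apply Nat.div_lt_of_lt_mul
              calc u.1.2 < 2 ^ u.1.1 := hj
              _ = 2 ^ (u.1.1 - ℓ') * 2 ^ ℓ' := by rw [← pow_add]; congr 1; omega
            exact this
          · exact u.2.2.2 ℓ' h
        · rw [hF] at hu; simp [if_neg h] at hu

lemma dyI_subset_unit {ℓ j : ℕ} (h : j < 2 ^ ℓ) : dyI ℓ j ⊆ Set.Ico (0:ℝ) 1 := by
  have h2 : (0:ℝ) < 2 ^ ℓ := by positivity
  apply Set.Ico_subset_Ico
  · positivity
  · rw [div_le_one h2]
    have : (j:ℝ) + 1 ≤ 2 ^ ℓ := by exact_mod_cast h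
    linarith

lemma telescope (φ : ℝ → ℝ) (ℓ' : ℕ) :
    ∑ k ∈ Finset.range (2 ^ ℓ'), lamBis φ ℓ' k = φ 1 - φ 0 := by
  have := Finset.sum_range_sub (fun k : ℕ => φ ((k : ℝ) / 2 ^ ℓ')) (2 ^ ℓ')
  have he : ∀ k : ℕ, lamBis φ ℓ' k = φ (((k+1 : ℕ) : ℝ) / 2 ^ ℓ') - φ ((k : ℝ) / 2 ^ ℓ') := by
    intro k; rw [lamBis]; push_cast; ring_nf
  rw [Finset.sum_congr rfl (fun k _ => he k), this]
  norm_num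

open MeasureTheory in
lemma big_union_bound (φ : ℝ → ℝ) {a b ε : ℝ} (hab : a < b) (hε : 0 < ε)
    (hmono : MonotoneOn φ (Set.Icc 0 1)) (hφ0 : φ 0 = a) (hφ1 : φ 1 = b) (ℓ' : ℕ) :
    volume (⋃ k ∈ Finset.filter (fun k => 2 * ε < lamBis φ ℓ' k) (Finset.range (2 ^ ℓ')),
        dyI ℓ' k)
      ≤ min 1 (ENNReal.ofReal ((b - a) / (2 * ε)) * ((2:ℝ≥0∞) ^ ℓ')⁻¹) := by
  set B := Finset.filter (fun k => 2 * ε < lamBis φ ℓ' k) (Finset.range (2 ^ ℓ')) with hB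
  refine le_min ?_ ?_
  · calc volume (⋃ k ∈ B, dyI ℓ' k) ≤ volume (Set.Ico (0:ℝ) 1) := by
          apply measure_mono
          refine Set.iUnion₂_subset fun k hk => ?_
          rw [hB, Finset.mem_filter, Finset.mem_range] at hk
          exact dyI_subset_unit hk.1
    _ = 1 := by rw [Real.volume_Ico]; norm_num
  · -- card bound
    have hlam_nonneg : ∀ k ∈ Finset.range (2 ^ ℓ'), 0 ≤ lamBis φ ℓ' k := by
      intro k hk
      rw [Finset.mem_range] at hk
      have h2 : (0:ℝ) < 2 ^ ℓ' := by positivity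
      have hk1 : (k:ℝ) + 1 ≤ 2 ^ ℓ' := by exact_mod_cast hk
      have hmem1 : (k:ℝ) / 2 ^ ℓ' ∈ Set.Icc (0:ℝ) 1 := by
        constructor
        · positivity
        · rw [div_le_one h2]; linarith
      have hmem2 : ((k:ℝ) + 1) / 2 ^ ℓ' ∈ Set.Icc (0:ℝ) 1 := by
        constructor
        · positivity
        · rw [div_le_one h2]; linarith
      have := hmono hmem1 hmem2 (by gcongr; linarith)
      rw [lamBis]; linarith
    have hcard : (B.card : ℝ) * (2 * ε) ≤ b - a := by
      have h1 : ∑ k ∈ B, (2 * ε) ≤ ∑ k ∈ B, lamBis φ ℓ' k := by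
        apply Finset.sum_le_sum
        intro k hk
        rw [hB, Finset.mem_filter] at hk
        exact hk.2.le
      have h2 : ∑ k ∈ B, lamBis φ ℓ' k ≤ ∑ k ∈ Finset.range (2 ^ ℓ'), lamBis φ ℓ' k := by
        apply Finset.sum_le_sum_of_subset_of_nonneg (Finset.filter_subset _ _)
        intro k hk _
        exact hlam_nonneg k hk
      rw [Finset.sum_const, nsmul_eq_mul] at h1
      rw [telescope, hφ0, hφ1] at h2
      linarith
    have hcard2 : (B.card : ℝ≥0∞) ≤ ENNReal.ofReal ((b - a) / (2 * ε)) := by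
      rw [show ((B.card : ℝ≥0∞)) = ENNReal.ofReal (B.card : ℝ) by
        rw [ENNReal.ofReal_natCast]]
      apply ENNReal.ofReal_le_ofReal
      rw [le_div_iff₀ (by linarith)]
      linarith
    calc volume (⋃ k ∈ B, dyI ℓ' k) ≤ ∑ k ∈ B, volume (dyI ℓ' k) :=
          measure_biUnion_finset_le B _
    _ = B.card * ((2:ℝ≥0∞) ^ ℓ')⁻¹ := by
        rw [Finset.sum_congr rfl (fun k _ => volume_dyI ℓ' k), Finset.sum_const, nsmul_eq_mul]
    _ ≤ _ := by gcongr

lemma count_eq (ℓ : ℕ) :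
    ∑' ℓ' : ℕ, (if ℓ' < ℓ then ((2:ℝ≥0∞) ^ ℓ)⁻¹ else 0) = (ℓ : ℝ≥0∞) / 2 ^ ℓ := by
  rw [tsum_eq_sum (s := Finset.range ℓ)
    (by intro n hn; rw [Finset.mem_range] at hn; simp [hn])]
  have h : ∀ n ∈ Finset.range ℓ, (if n < ℓ then ((2:ℝ≥0∞) ^ ℓ)⁻¹ else 0) = ((2:ℝ≥0∞) ^ ℓ)⁻¹ :=
    fun n hn => if_pos (Finset.mem_range.1 hn)
  rw [Finset.sum_congr rfl h, Finset.sum_const, Finset.card_range, nsmul_eq_mul, div_eq_mul_inv]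

lemma final_sum {C : ℝ} (hC : 0 < C) :
    ∑' ℓ' : ℕ, min 1 (ENNReal.ofReal C * ((2:ℝ≥0∞) ^ ℓ')⁻¹)
      ≤ ENNReal.ofReal (3 + max 0 (Real.logb 2 C)) := by
  set m := ⌈Real.logb 2 C⌉₊ with hm
  have hCm : C ≤ 2 ^ m := by
    have h1 : Real.logb 2 C ≤ (m : ℝ) := Nat.le_ceil _
    have h2 : C = (2:ℝ) ^ (Real.logb 2 C) := (Real.rpow_logb (by norm_num) (by norm_num) hC).symm
    calc C = (2:ℝ) ^ (Real.logb 2 C) := h2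
    _ ≤ (2:ℝ) ^ (m : ℝ) := Real.rpow_le_rpow_of_exponent_le (by norm_num) h1
    _ = 2 ^ m := by rw [Real.rpow_natCast]
  have hmle : (m : ℝ) ≤ max 0 (Real.logb 2 C) + 1 := by
    rcases le_or_gt (Real.logb 2 C) 0 with h | h
    · have : m = 0 := Nat.ceil_eq_zero.2 h
      rw [this]
      simp [le_max_iff]
      positivity
    · have := Nat.ceil_lt_add_one h.le
      have h2 : Real.logb 2 C ≤ max 0 (Real.logb 2 C) := le_max_right _ _
      linarith
  have hCm' : ENNReal.ofReal C ≤ (2:ℝ≥0∞) ^ m := by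
    rw [show ((2:ℝ≥0∞) ^ m) = ENNReal.ofReal ((2:ℝ) ^ m) by
      rw [ENNReal.ofReal_pow (by norm_num)]; norm_num]
    exact ENNReal.ofReal_le_ofReal hCm
  set f : ℕ → ℝ≥0∞ := fun ℓ' => min 1 (ENNReal.ofReal C * ((2:ℝ≥0∞) ^ ℓ')⁻¹) with hf
  have hsplit : ∑' ℓ', f ℓ' = ∑ i ∈ Finset.range m, f i + ∑' i, f (i + m) :=
    (Summable.sum_add_tsum_nat_add' (f := f) (k := m) ENNReal.summable).symm
  rw [hsplit]
  have hhead : ∑ i ∈ Finset.range m, f i ≤ (m : ℝ≥0∞) := by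
    calc ∑ i ∈ Finset.range m, f i ≤ ∑ _i ∈ Finset.range m, 1 :=
          Finset.sum_le_sum (fun i _ => min_le_left _ _)
    _ = (m : ℝ≥0∞) := by simp
  have htail : ∑' i, f (i + m) ≤ 2 := by
    have hpt : ∀ i : ℕ, f (i + m) ≤ ((2:ℝ≥0∞)⁻¹) ^ i := by
      intro i
      calc f (i + m) ≤ ENNReal.ofReal C * ((2:ℝ≥0∞) ^ (i + m))⁻¹ := min_le_right _ _
      _ ≤ (2:ℝ≥0∞) ^ m * ((2:ℝ≥0∞) ^ (i + m))⁻¹ := by gcongr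
      _ = ((2:ℝ≥0∞)⁻¹) ^ i := by
          rw [pow_add, ENNReal.mul_inv (by simp) (by simp),
            mul_comm (((2:ℝ≥0∞) ^ i)⁻¹), ← mul_assoc,
            ENNReal.mul_inv_cancel (by simp) (by simp), one_mul, ENNReal.inv_pow]
    calc ∑' i, f (i + m) ≤ ∑' i : ℕ, ((2:ℝ≥0∞)⁻¹) ^ i := ENNReal.tsum_le_tsum hpt
    _ = 2 := by
        rw [ENNReal.tsum_geometric, ENNReal.one_sub_inv_two, inv_inv]
  calc ∑ i ∈ Finset.range m, f i + ∑' i, f (i + m) ≤ (m : ℝ≥0∞) + 2 :=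
        add_le_add hhead htail
  _ = ENNReal.ofReal ((m : ℝ) + 2) := by
      rw [ENNReal.ofReal_add (by positivity) (by norm_num), ENNReal.ofReal_natCast]
      norm_num
  _ ≤ _ := by
      apply ENNReal.ofReal_le_ofReal
      linarith

/-- Theorem 1(ii): the expected number of bits used by the bisection algorithm,
`Σ_{(ℓ,j) halting} ℓ·2^{-ℓ}`, is at most `3 + log₂⁺(L/(2ε))`. -/
theorem stmt0 (a b ε : ℝ) (hab : a < b) (hε : 0 < ε)
    (φ : ℝ → ℝ) (hmono : MonotoneOn φ (Set.Icc 0 1))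
    (hmaps : Set.MapsTo φ (Set.Icc 0 1) (Set.Icc a b))
    (hφ0 : φ 0 = a) (hφ1 : φ 1 = b) :
    ∑' u : {q : ℕ × ℕ // HaltingNode φ ε q.1 q.2}, ((u.1.1 : ℝ≥0∞) / 2 ^ u.1.1)
      ≤ ENNReal.ofReal (3 + max 0 (Real.logb 2 ((b - a) / (2 * ε)))) := by
  have hL : (0:ℝ) < b - a := sub_pos.2 hab
  have hC : (0:ℝ) < (b - a) / (2 * ε) := by positivity
  calc ∑' u : {q : ℕ × ℕ // HaltingNode φ ε q.1 q.2}, ((u.1.1 : ℝ≥0∞) / 2 ^ u.1.1)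
      = ∑' u : {q : ℕ × ℕ // HaltingNode φ ε q.1 q.2}, ∑' ℓ' : ℕ,
          (if ℓ' < u.1.1 then ((2:ℝ≥0∞) ^ u.1.1)⁻¹ else 0) :=
        tsum_congr (fun u => (count_eq u.1.1).symm)
    _ = ∑' ℓ' : ℕ, ∑' u : {q : ℕ × ℕ // HaltingNode φ ε q.1 q.2},
          (if ℓ' < u.1.1 then ((2:ℝ≥0∞) ^ u.1.1)⁻¹ else 0) := ENNReal.tsum_comm
    _ ≤ ∑' ℓ' : ℕ, min 1 (ENNReal.ofReal ((b - a) / (2 * ε)) * ((2:ℝ≥0∞) ^ ℓ')⁻¹) :=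
        ENNReal.tsum_le_tsum (fun ℓ' =>
          (level_bound φ ε ℓ').trans (big_union_bound φ hab hε hmono hφ0 hφ1 ℓ'))
    _ ≤ _ := final_sum hC
end

section
/- Let L be a prefix-free set of finite binary strings and let I be the set of all proper prefixes of elements of L. If there is an integer m ≥ 1 such that for every ℓ ≥ 0 the number N_ℓ = #{v ∈ I : |v| = ℓ} satisfies N_ℓ ≤ m, then Σ_{u∈L} |u|·2^{−|u|} ≤ log₂(m) + 3. -/
open scoped ENNReal

/-- Kraft inequality for finite prefix-free sets of binary strings. -/
private lemma kraft_base : ∀ (n : ℕ) (F : Finset (List Bool)),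
    (∀ u ∈ F, u.length ≤ n) →
    (∀ u ∈ F, ∀ v ∈ F, u <+: v → u = v) →
    ∑ u ∈ F, (2⁻¹ : ℝ≥0∞) ^ u.length ≤ 1 := by
  intro n
  induction n with
  | zero =>
    intro F hlen _
    have hsub : F ⊆ {([] : List Bool)} := by
      intro u hu
      simp only [Finset.mem_singleton]
      exact List.length_eq_zero_iff.mp (Nat.le_zero.mp (hlen u hu))
    calc ∑ u ∈ F, (2⁻¹ : ℝ≥0∞) ^ u.length
        ≤ ∑ u ∈ ({([] : List Bool)} : Finset (List Bool)), (2⁻¹ : ℝ≥0∞) ^ u.length :=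
          Finset.sum_le_sum_of_subset hsub
      _ = 1 := by simp
  | succ n ih =>
    intro F hlen hpf
    by_cases hnil : ([] : List Bool) ∈ F
    · have hF : F = {([] : List Bool)} := by
        apply Finset.eq_singleton_iff_unique_mem.mpr
        exact ⟨hnil, fun u hu => (hpf _ hnil _ hu (List.nil_prefix)).symm⟩
      simp [hF]
    · have key : ∀ (b : Bool) (G : Finset (List Bool)), G ⊆ F →
          (∀ u ∈ G, u.head? = some b) →
          ∑ u ∈ G, (2⁻¹ : ℝ≥0∞) ^ u.length ≤ 2⁻¹ := by
        intro b G hGF hhead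
        have hcons : ∀ u ∈ G, u = b :: u.tail := by
          intro u hu
          cases u with
          | nil => simpa using hhead _ hu
          | cons a t =>
            have := hhead _ hu
            simp only [List.head?_cons, Option.some.injEq] at this
            simp [this]
        have hinj : ∀ u ∈ G, ∀ u' ∈ G, u.tail = u'.tail → u = u' := by
          intro u hu u' hu' h
          rw [hcons u hu, hcons u' hu', h]
        have him := Finset.sum_image (g := List.tail) (s := G)
          (f := fun w => (2⁻¹ : ℝ≥0∞) ^ (w.length + 1)) hinj
        have hlen' : ∀ u ∈ G, u.length = u.tail.length + 1 := by
          intro u hu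
          conv_lhs => rw [hcons u hu]
          simp
        have hsum : ∑ u ∈ G, (2⁻¹ : ℝ≥0∞) ^ u.length
            = ∑ w ∈ G.image List.tail, (2⁻¹ : ℝ≥0∞) ^ (w.length + 1) := by
          rw [him]
          exact Finset.sum_congr rfl fun u hu => by rw [hlen' u hu]
        rw [hsum]
        have : ∀ w ∈ G.image List.tail, (2⁻¹ : ℝ≥0∞) ^ (w.length + 1)
            = 2⁻¹ * (2⁻¹ : ℝ≥0∞) ^ w.length := by
          intro w _; ring
        rw [Finset.sum_congr rfl this, ← Finset.mul_sum]
        have hle1 : ∑ w ∈ G.image List.tail, (2⁻¹ : ℝ≥0∞) ^ w.length ≤ 1 := by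
          apply ih
          · intro w hw
            obtain ⟨u, hu, rfl⟩ := Finset.mem_image.mp hw
            have := hlen _ (hGF hu)
            rw [hlen' u hu] at this
            omega
          · intro w hw w' hw' hpre
            obtain ⟨u, hu, rfl⟩ := Finset.mem_image.mp hw
            obtain ⟨u', hu', rfl⟩ := Finset.mem_image.mp hw'
            have : u <+: u' := by
              rw [hcons u hu, hcons u' hu']
              exact List.cons_prefix_cons.mpr ⟨rfl, hpre⟩
            rw [hpf _ (hGF hu) _ (hGF hu') this]
        calc 2⁻¹ * ∑ w ∈ G.image List.tail, (2⁻¹ : ℝ≥0∞) ^ w.length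
            ≤ 2⁻¹ * 1 := by
              exact mul_le_mul_right hle1 _
          _ = 2⁻¹ := mul_one _
      have hsplit := Finset.sum_filter_add_sum_filter_not F
        (fun u => u.head? = some true) (fun u => (2⁻¹ : ℝ≥0∞) ^ u.length)
      have h1 : ∑ u ∈ F.filter (fun u => u.head? = some true), (2⁻¹ : ℝ≥0∞) ^ u.length ≤ 2⁻¹ :=
        key true _ (Finset.filter_subset _ _) (fun u hu => (Finset.mem_filter.mp hu).2)
      have h2 : ∑ u ∈ F.filter (fun u => ¬ u.head? = some true), (2⁻¹ : ℝ≥0∞) ^ u.length ≤ 2⁻¹ := by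
        apply key false _ (Finset.filter_subset _ _)
        intro u hu
        obtain ⟨hu1, hu2⟩ := Finset.mem_filter.mp hu
        cases u with
        | nil => exact absurd hu1 hnil
        | cons a t => cases a <;> simp_all
      calc ∑ u ∈ F, (2⁻¹ : ℝ≥0∞) ^ u.length
          = _ + _ := hsplit.symm
        _ ≤ 2⁻¹ + 2⁻¹ := add_le_add h1 h2
        _ = 1 := ENNReal.inv_two_add_inv_two

/-- Kraft inequality for a finite prefix-free set all of whose members extend `v`. -/
private lemma kraft_prefix (v : List Bool) (F : Finset (List Bool))
    (hv : ∀ u ∈ F, v <+: u)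
    (hpf : ∀ u ∈ F, ∀ w ∈ F, u <+: w → u = w) :
    ∑ u ∈ F, (2⁻¹ : ℝ≥0∞) ^ u.length ≤ 2⁻¹ ^ v.length := by
  have hdec : ∀ u ∈ F, v ++ u.drop v.length = u := by
    intro u hu
    obtain ⟨d, hd⟩ := hv u hu
    rw [← hd, List.drop_left]
  have hinj : ∀ u ∈ F, ∀ u' ∈ F, u.drop v.length = u'.drop v.length → u = u' := by
    intro u hu u' hu' h
    rw [← hdec u hu, h, hdec u' hu']
  have him := Finset.sum_image (g := fun u => List.drop v.length u) (s := F)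
    (f := fun w => (2⁻¹ : ℝ≥0∞) ^ (v.length + w.length)) hinj
  have hlen' : ∀ u ∈ F, u.length = v.length + (u.drop v.length).length := by
    intro u hu
    conv_lhs => rw [← hdec u hu]
    simp
  have hsum : ∑ u ∈ F, (2⁻¹ : ℝ≥0∞) ^ u.length
      = ∑ w ∈ F.image (fun u => List.drop v.length u), (2⁻¹ : ℝ≥0∞) ^ (v.length + w.length) := by
    rw [him]
    exact Finset.sum_congr rfl fun u hu => by rw [hlen' u hu]
  rw [hsum]
  have hpa : ∀ w ∈ F.image (fun u => List.drop v.length u), (2⁻¹ : ℝ≥0∞) ^ (v.length + w.length)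
      = 2⁻¹ ^ v.length * (2⁻¹ : ℝ≥0∞) ^ w.length := fun w _ => pow_add _ _ _
  rw [Finset.sum_congr rfl hpa, ← Finset.mul_sum]
  have hle1 : ∑ w ∈ F.image (fun u => List.drop v.length u), (2⁻¹ : ℝ≥0∞) ^ w.length ≤ 1 := by
    apply kraft_base ((F.image (fun u => List.drop v.length u)).sup List.length)
    · intro w hw; exact Finset.le_sup hw
    · intro w hw w' hw' hpre
      obtain ⟨u, hu, rfl⟩ := Finset.mem_image.mp hw
      obtain ⟨u', hu', rfl⟩ := Finset.mem_image.mp hw'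
      have hpre' : u <+: u' := by
        rw [← hdec u hu, ← hdec u' hu']
        obtain ⟨e, he⟩ := hpre
        exact ⟨e, by rw [List.append_assoc, he]⟩
      rw [hpf _ hu _ hu' hpre']
  calc 2⁻¹ ^ v.length * ∑ w ∈ F.image (fun u => List.drop v.length u), (2⁻¹ : ℝ≥0∞) ^ w.length
      ≤ 2⁻¹ ^ v.length * 1 := mul_le_mul_right hle1 _
    _ = 2⁻¹ ^ v.length := mul_one _

/-- If `L` is a prefix-free set of finite binary strings whose tree has at most `m`
internal nodes at every depth (`N_ℓ ≤ m` for all `ℓ`), then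
`Σ_{u∈L} |u|·2^{-|u|} ≤ log₂(m) + 3`. -/
theorem stmt4 (L : Set (List Bool))
    (hpf : ∀ u ∈ L, ∀ v ∈ L, u <+: v → u = v)
    (m : ℕ) (hm : 1 ≤ m)
    (hN : ∀ ℓ : ℕ,
      {v : List Bool | (∃ u ∈ L, v <+: u ∧ v ≠ u) ∧ v.length = ℓ}.encard ≤ m) :
    ∑' u : L, (u.1.length : ℝ≥0∞) * (2 : ℝ≥0∞)⁻¹ ^ u.1.length ≤
      ENNReal.ofReal (Real.logb 2 m + 3) := by
  classical
  set k := Nat.clog 2 m with hk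
  have hm2k : m ≤ 2 ^ k := Nat.le_pow_clog (by norm_num) m
  -- a helper for expanding n * y as a tsum
  have hexp : ∀ (n : ℕ) (y : ℝ≥0∞), ∑' ℓ : ℕ, (if ℓ < n then y else 0) = n * y := by
    intro n y
    rw [tsum_eq_sum (s := Finset.range n)
      (by intro ℓ hℓ; rw [if_neg]; simpa using hℓ)]
    rw [Finset.sum_congr rfl (fun ℓ hℓ => if_pos (Finset.mem_range.mp hℓ))]
    simp [mul_comm]
  -- bounding a tsum over L by finite sums
  have tsub : ∀ (f : List Bool → ℝ≥0∞) (c : ℝ≥0∞),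
      (∀ F : Finset (List Bool), ↑F ⊆ L → ∑ u ∈ F, f u ≤ c) → ∑' u : L, f u ≤ c := by
    intro f c h
    rw [ENNReal.tsum_eq_iSup_sum]
    apply iSup_le
    intro s
    have hs : ↑(s.image Subtype.val) ⊆ L := by
      intro u hu
      simp only [Finset.coe_image, Set.mem_image, Finset.mem_coe] at hu
      obtain ⟨x, _, rfl⟩ := hu
      exact x.2
    have := h (s.image Subtype.val) hs
    rwa [Finset.sum_image (fun x _ y _ h => Subtype.ext h)] at this
  -- the column sums
  set B : ℕ → ℝ≥0∞ := fun ℓ =>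
    ∑' u : L, (if ℓ < u.1.length then (2 : ℝ≥0∞)⁻¹ ^ u.1.length else 0) with hB
  have hswap : ∑' u : L, (u.1.length : ℝ≥0∞) * (2 : ℝ≥0∞)⁻¹ ^ u.1.length = ∑' ℓ : ℕ, B ℓ := by
    rw [hB, ENNReal.tsum_comm]
    exact tsum_congr fun u => (hexp _ _).symm
  -- each column sum is at most 1 (Kraft)
  have hB1 : ∀ ℓ : ℕ, B ℓ ≤ 1 := by
    intro ℓ
    refine tsub (fun u => if ℓ < u.length then (2 : ℝ≥0∞)⁻¹ ^ u.length else 0) 1 ?_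
    intro F hF
    calc ∑ u ∈ F, (if ℓ < u.length then (2 : ℝ≥0∞)⁻¹ ^ u.length else 0)
        ≤ ∑ u ∈ F, (2 : ℝ≥0∞)⁻¹ ^ u.length := by
          apply Finset.sum_le_sum
          intro u _
          split <;> simp
      _ ≤ 1 := kraft_base (F.sup List.length) F (fun u hu => Finset.le_sup hu)
          (fun u hu w hw => hpf u (hF hu) w (hF hw))
  -- each column sum is at most m * 2⁻¹ ^ ℓ
  have hB2 : ∀ ℓ : ℕ, B ℓ ≤ (m : ℝ≥0∞) * 2⁻¹ ^ ℓ := by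
    intro ℓ
    refine tsub (fun u => if ℓ < u.length then (2 : ℝ≥0∞)⁻¹ ^ u.length else 0)
      ((m : ℝ≥0∞) * 2⁻¹ ^ ℓ) ?_
    intro F hF
    rw [← Finset.sum_filter]
    set t := F.filter (fun u => ℓ < u.length) with ht
    have htF : t ⊆ F := Finset.filter_subset _ _
    have htlen : ∀ u ∈ t, ℓ < u.length := fun u hu => (Finset.mem_filter.mp hu).2
    set V := t.image (fun u => u.take ℓ) with hV
    rw [← Finset.sum_fiberwise_of_maps_to (g := fun u => u.take ℓ) (t := V)
      (fun u hu => Finset.mem_image_of_mem _ hu)]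
    have hfiber : ∀ v ∈ V,
        ∑ u ∈ t.filter (fun u => u.take ℓ = v), (2 : ℝ≥0∞)⁻¹ ^ u.length ≤ 2⁻¹ ^ ℓ := by
      intro v hv
      obtain ⟨u₀, hu₀, rfl⟩ := Finset.mem_image.mp hv
      have hvlen : (u₀.take ℓ).length = ℓ := by
        rw [List.length_take]
        exact min_eq_left (le_of_lt (htlen _ hu₀))
      have hkp := kraft_prefix (u₀.take ℓ)
        (t.filter (fun u => u.take ℓ = u₀.take ℓ))
        (fun u hu => by
          obtain ⟨hu1, hu2⟩ := Finset.mem_filter.mp hu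
          rw [← hu2]
          exact List.take_prefix _ _)
        (fun u hu w hw => hpf u (hF (htF (Finset.mem_filter.mp hu).1)) w
          (hF (htF (Finset.mem_filter.mp hw).1)))
      rwa [hvlen] at hkp
    calc ∑ v ∈ V, ∑ u ∈ t.filter (fun u => u.take ℓ = v), (2 : ℝ≥0∞)⁻¹ ^ u.length
        ≤ ∑ _v ∈ V, (2 : ℝ≥0∞)⁻¹ ^ ℓ := Finset.sum_le_sum hfiber
      _ = (V.card : ℝ≥0∞) * 2⁻¹ ^ ℓ := by rw [Finset.sum_const, nsmul_eq_mul]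
      _ ≤ (m : ℝ≥0∞) * 2⁻¹ ^ ℓ := by
          apply mul_le_mul_left
          have hVsub : (↑V : Set (List Bool)) ⊆
              {v : List Bool | (∃ u ∈ L, v <+: u ∧ v ≠ u) ∧ v.length = ℓ} := by
            intro v hv
            rw [Finset.mem_coe, hV, Finset.mem_image] at hv
            obtain ⟨u, hu, rfl⟩ := hv
            have hlt := htlen u hu
            have hvlen : (u.take ℓ).length = ℓ := by
              rw [List.length_take]; exact min_eq_left (le_of_lt hlt)
            refine ⟨⟨u, hF (htF hu), List.take_prefix _ _, ?_⟩, hvlen⟩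
            intro h
            rw [h] at hvlen
            omega
          have := (Set.encard_mono hVsub).trans (hN ℓ)
          rw [Set.encard_coe_eq_coe_finsetCard] at this
          exact_mod_cast this
  -- splitting the sum over ℓ
  have hsplit : ∑' ℓ : ℕ, B ℓ ≤
      (∑' ℓ : ℕ, (if ℓ < k then (1 : ℝ≥0∞) else 0)) +
      (∑' ℓ : ℕ, (if k ≤ ℓ then (m : ℝ≥0∞) * 2⁻¹ ^ ℓ else 0)) := by
    rw [← ENNReal.tsum_add]
    apply ENNReal.tsum_le_tsum
    intro ℓ
    by_cases h : ℓ < k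
    · rw [if_pos h, if_neg (by omega)]
      simpa using hB1 ℓ
    · rw [if_neg h, if_pos (by omega)]
      simpa using hB2 ℓ
  -- the first piece equals k
  have hpiece1 : ∑' ℓ : ℕ, (if ℓ < k then (1 : ℝ≥0∞) else 0) = k := by
    rw [hexp k 1, mul_one]
  -- the second piece is at most 2
  have hpiece2 : ∑' ℓ : ℕ, (if k ≤ ℓ then (m : ℝ≥0∞) * 2⁻¹ ^ ℓ else 0) ≤ 2 := by
    have hinj : Function.Injective (fun j : ℕ => k + j) := fun a b h => Nat.add_left_cancel h
    have hsupp : Function.support (fun ℓ : ℕ => if k ≤ ℓ then (m : ℝ≥0∞) * 2⁻¹ ^ ℓ else 0)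
        ⊆ Set.range (fun j : ℕ => k + j) := by
      intro ℓ hℓ
      simp only [Function.mem_support, ne_eq, ite_eq_right_iff, not_forall] at hℓ
      obtain ⟨hkl, -⟩ := hℓ
      exact ⟨ℓ - k, by show k + (ℓ - k) = ℓ; omega⟩
    rw [← hinj.tsum_eq hsupp]
    have : ∀ j : ℕ, (if k ≤ k + j then (m : ℝ≥0∞) * 2⁻¹ ^ (k + j) else 0)
        = ((m : ℝ≥0∞) * 2⁻¹ ^ k) * 2⁻¹ ^ j := by
      intro j
      rw [if_pos (Nat.le_add_right _ _), pow_add, mul_assoc]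
    rw [tsum_congr this, ENNReal.tsum_mul_left, ENNReal.tsum_geometric,
      ENNReal.one_sub_inv_two, inv_inv]
    have hmk : (m : ℝ≥0∞) * 2⁻¹ ^ k ≤ 1 := by
      have h1 : (m : ℝ≥0∞) ≤ 2 ^ k := by exact_mod_cast hm2k
      calc (m : ℝ≥0∞) * 2⁻¹ ^ k ≤ 2 ^ k * 2⁻¹ ^ k := mul_le_mul_left h1 _
        _ = 1 := by
            rw [← ENNReal.inv_pow, ENNReal.mul_inv_cancel (by positivity)
              (ENNReal.pow_ne_top ENNReal.ofNat_ne_top)]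
    calc (m : ℝ≥0∞) * 2⁻¹ ^ k * 2 ≤ 1 * 2 := mul_le_mul_left hmk _
      _ = 2 := one_mul _
  -- the arithmetic: k ≤ logb 2 m + 1
  have hkreal : (k : ℝ) ≤ Real.logb 2 m + 1 := by
    rcases eq_or_lt_of_le hm with h1 | h2
    · have : k = 0 := by rw [hk, ← h1]; simp
      rw [this]
      have : (0 : ℝ) ≤ Real.logb 2 m := Real.logb_nonneg (by norm_num) (by exact_mod_cast hm)
      push_cast
      linarith
    · have hk1 : 1 ≤ k := by
        rw [hk]
        exact Nat.one_le_iff_ne_zero.mpr (by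
          intro h
          have := Nat.le_pow_clog (b := 2) (by norm_num) m
          rw [h] at this
          omega)
      have hlt : 2 ^ (k - 1) < m := Nat.pow_pred_clog_lt_self (by norm_num) h2
      have hltR : (2 : ℝ) ^ (k - 1) < m := by exact_mod_cast hlt
      have hlog : ((k - 1 : ℕ) : ℝ) < Real.logb 2 m := by
        have := Real.logb_lt_logb (b := 2) (by norm_num) (by positivity) hltR
        rwa [Real.logb_pow, Real.logb_self_eq_one (by norm_num), mul_one] at this
      have : ((k - 1 : ℕ) : ℝ) = (k : ℝ) - 1 := by
        push_cast [hk1]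
        ring
      linarith [hlog, this ▸ hlog]
  -- putting everything together
  rw [hswap]
  calc ∑' ℓ : ℕ, B ℓ ≤ (k : ℝ≥0∞) + 2 := by
        refine hsplit.trans ?_
        rw [hpiece1]
        exact add_le_add_right hpiece2 _
    _ ≤ ENNReal.ofReal (Real.logb 2 m + 3) := by
        have h3 : Real.logb 2 m + 3 = (Real.logb 2 m + 1) + 2 := by ring
        have hnn : (0 : ℝ) ≤ Real.logb 2 m + 1 := by
          have : (0 : ℝ) ≤ Real.logb 2 m := Real.logb_nonneg (by norm_num) (by exact_mod_cast hm)
          linarith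
        rw [h3, ENNReal.ofReal_add hnn (by norm_num)]
        apply add_le_add
        · rw [← ENNReal.ofReal_natCast k]
          exact ENNReal.ofReal_le_ofReal hkreal
        · norm_num
end
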